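/- Let H be a real Hilbert space, λ ∈ ℝ, and let Φ : H → (−∞,+∞] be proper, λ-convex, and lower semicontinuous. Then for every γ ∈ 𝔦_{−λ} one has J_γ(Φ) = R_γ(∂^λΦ) as operators on H, and moreover for all (x,y), (x̂,ŷ) ∈ J_γ(Φ), ‖y − ŷ‖ ≤ (1 + γλ)⁻¹ ‖x − x̂‖. -/

import Mathlib

open scoped RealInnerProductSpace

/-- The identity operator `I_X = {(x,x) | x ∈ X}`. -/
def idOp (X : Type*) : Set (X × X) := {p | p.2 = p.1}

/-- Sum of operators: `A + B = {(x, y+z) | (x,y) ∈ A, (x,z) ∈ B}`. -/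
def opAdd {X : Type*} [Add X] (A B : Set (X × X)) : Set (X × X) :=
  {p | ∃ y z, (p.1, y) ∈ A ∧ (p.1, z) ∈ B ∧ p.2 = y + z}

/-- Scalar multiple of an operator: `λA = {(x, λy) | (x,y) ∈ A}`. -/
def opSMul {X : Type*} [SMul ℝ X] (c : ℝ) (A : Set (X × X)) : Set (X × X) :=
  {p | ∃ y, (p.1, y) ∈ A ∧ p.2 = c • y}

/-- The inverse operator `A⁻¹ = {(x,y) | (y,x) ∈ A}`. -/
def opInv {X : Type*} (A : Set (X × X)) : Set (X × X) := {p | (p.2, p.1) ∈ A}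

/-- The resolvent `R_λ(A) = (I_X + λA)⁻¹`. -/
def opResolvent {X : Type*} [Add X] [SMul ℝ X] (c : ℝ) (A : Set (X × X)) : Set (X × X) :=
  opInv (opAdd (idOp X) (opSMul c A))

/-- The subdifferential of `Φ : H → (−∞,+∞]`:
`∂Φ = {(x,y) | ∀ h, Φ(x+h) ≥ Φ(x) + ⟨y,h⟩}`. -/
def subdiff {H : Type*} [NormedAddCommGroup H] [InnerProductSpace ℝ H]
    (Φ : H → EReal) : Set (H × H) :=
  {p | ∀ h : H, Φ p.1 + ((⟪p.2, h⟫ : ℝ) : EReal) ≤ Φ (p.1 + h)}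

/-- The adjusted subdifferential `∂^λΦ := ∂(Φ − (λ/2)‖·‖²) + λ I_H`. -/
def subdiffL {H : Type*} [NormedAddCommGroup H] [InnerProductSpace ℝ H]
    (l : ℝ) (Φ : H → EReal) : Set (H × H) :=
  opAdd (subdiff (fun x => Φ x - (((l / 2) * ‖x‖ ^ 2 : ℝ) : EReal))) (opSMul l (idOp H))

/-- `Φ` is `λ`-convex: `Φ(tx + (1−t)y) ≤ tΦ(x) + (1−t)Φ(y) − (λ/2)t(1−t)‖x−y‖²`. -/
def LambdaConvex {H : Type*} [NormedAddCommGroup H] [NormedSpace ℝ H]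
    (l : ℝ) (Φ : H → EReal) : Prop :=
  ∀ x y : H, ∀ t : ℝ, t ∈ Set.Icc (0 : ℝ) 1 →
    Φ (t • x + (1 - t) • y) ≤
      (t : EReal) * Φ x + ((1 - t : ℝ) : EReal) * Φ y
        - (((l / 2) * t * (1 - t) * ‖x - y‖ ^ 2 : ℝ) : EReal)

/-- The Moreau envelope `[Φ]^γ(x) = inf_y ( Φ(y) + ‖y − x‖²/(2γ) )`. -/
noncomputable def moreauEnv {H : Type*} [NormedAddCommGroup H]
    (Φ : H → EReal) (γ : ℝ) (x : H) : EReal :=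
  ⨅ y : H, Φ y + ((‖y - x‖ ^ 2 / (2 * γ) : ℝ) : EReal)

/-- The proximal operator `J_γ(Φ) = {(x,y) | [Φ]^γ(x) = Φ(y) + ‖y − x‖²/(2γ)}`. -/
noncomputable def proxOp {H : Type*} [NormedAddCommGroup H]
    (Φ : H → EReal) (γ : ℝ) : Set (H × H) :=
  {p | moreauEnv Φ γ p.1 = Φ p.2 + ((‖p.2 - p.1‖ ^ 2 / (2 * γ) : ℝ) : EReal)}

open Classical in
/-- The interval `𝔦_ω`: `(0, 1/ω)` if `ω > 0` and `(0, +∞)` if `ω ≤ 0`. -/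
noncomputable def Iomega (ω : ℝ) : Set ℝ :=
  if 0 < ω then Set.Ioo 0 (1 / ω) else Set.Ioi 0

section Aux

variable {H : Type*} [NormedAddCommGroup H] [InnerProductSpace ℝ H]

lemma real_limit_aux {a s k : ℝ} (hk : 0 ≤ k)
    (h : ∀ t : ℝ, 0 < t → t ≤ 1 → a ≤ s + t * k) : a ≤ s := by
  by_contra hc
  push_neg at hc
  rcases eq_or_lt_of_le hk with hk0 | hk0
  · have := h 1 one_pos le_rfl; rw [← hk0] at this; linarith
  · have hpos : 0 < (a - s)/(2*k) := div_pos (by linarith) (by linarith)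
    have ht := h (min 1 ((a - s)/(2*k))) (lt_min one_pos hpos) (min_le_left _ _)
    have h2 : min 1 ((a-s)/(2*k)) * k ≤ (a-s)/2 := by
      calc min 1 ((a-s)/(2*k)) * k ≤ ((a-s)/(2*k)) * k :=
            mul_le_mul_of_nonneg_right (min_le_right _ _) hk
        _ = (a-s)/2 := by field_simp
    linarith

lemma prox_mem_iff (Φ : H → EReal) (γ : ℝ) (x y : H) :
    (x, y) ∈ proxOp Φ γ ↔
      ∀ z, Φ y + ((‖y - x‖ ^ 2 / (2 * γ) : ℝ) : EReal)
        ≤ Φ z + ((‖z - x‖ ^ 2 / (2 * γ) : ℝ) : EReal) := by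
  constructor
  · intro hm z
    have : moreauEnv Φ γ x ≤ Φ z + ((‖z - x‖ ^ 2 / (2 * γ) : ℝ) : EReal) := iInf_le _ z
    rw [hm] at this; exact this
  · intro h
    exact le_antisymm (iInf_le _ y) (le_iInf h)

lemma lemA (l γ : ℝ) (hγ0 : 0 < γ) (hγl : 0 < 1 + γ * l)
    (Φ : H → EReal) (hconv : LambdaConvex l Φ)
    (x y : H) (r : ℝ) (hr : Φ y = (r : EReal))
    (hmin : ∀ z, Φ y + ((‖y - x‖ ^ 2 / (2 * γ) : ℝ) : EReal)
      ≤ Φ z + ((‖z - x‖ ^ 2 / (2 * γ) : ℝ) : EReal))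
    (h : H) :
    ((r + ⟪x - y, h⟫ / γ + l / 2 * ‖h‖ ^ 2 : ℝ) : EReal) ≤ Φ (y + h) := by
  rcases eq_or_ne (Φ (y + h)) ⊤ with htop | hne
  · rw [htop]; exact le_top
  have hnb : Φ (y + h) ≠ ⊥ := by
    intro hb
    have hm := hmin (y + h)
    rw [hb, hr] at hm
    simp at hm
  obtain ⟨s, hs⟩ : ∃ s : ℝ, Φ (y + h) = (s : EReal) := ⟨_, (EReal.coe_toReal hne hnb).symm⟩
  rw [hs, EReal.coe_le_coe_iff]
  apply real_limit_aux (k := (1 + γ*l)/(2*γ) * ‖h‖^2) (by positivity)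
  intro t ht0 ht1
  have hc := hconv (y + h) y t ⟨le_of_lt ht0, ht1⟩
  have hyt : t • (y + h) + (1 - t) • y = y + t • h := by module
  have hnm : ‖(y + h) - y‖ = ‖h‖ := by simp
  rw [hyt, hs, hr, hnm] at hc
  have hc' : Φ (y + t • h) ≤ ((t * s + (1 - t) * r - l/2 * t * (1-t) * ‖h‖^2 : ℝ) : EReal) := by
    refine le_trans hc (le_of_eq ?_)
    push_cast
    ring
  have hm := hmin (y + t • h)
  rw [hr] at hm
  have key : ((r + ‖y - x‖^2/(2*γ) : ℝ) : EReal)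
      ≤ ((t * s + (1 - t) * r - l/2 * t * (1-t) * ‖h‖^2 + ‖y + t • h - x‖^2/(2*γ) : ℝ) : EReal) := by
    calc ((r + ‖y - x‖^2/(2*γ) : ℝ) : EReal)
        = (r : EReal) + ((‖y - x‖^2/(2*γ) : ℝ) : EReal) := by push_cast; ring
      _ ≤ Φ (y + t • h) + ((‖y + t • h - x‖^2/(2*γ) : ℝ) : EReal) := hm
      _ ≤ ((t * s + (1 - t) * r - l/2 * t * (1-t) * ‖h‖^2 : ℝ) : EReal)
          + ((‖y + t • h - x‖^2/(2*γ) : ℝ) : EReal) := add_le_add_left hc' _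
      _ = _ := by push_cast; ring
  rw [EReal.coe_le_coe_iff] at key
  have hexp : ‖y + t • h - x‖^2 = ‖y - x‖^2 + 2*(t*⟪y - x, h⟫) + t^2*‖h‖^2 := by
    have e1 : y + t • h - x = (y - x) + t • h := by abel
    rw [e1, norm_add_sq_real, real_inner_smul_right, norm_smul]
    rw [Real.norm_eq_abs, abs_of_pos ht0]
    ring
  rw [hexp] at key
  have hxy : ⟪x - y, h⟫ = -⟪y - x, h⟫ := by
    rw [← inner_neg_left]; congr 1; abel
  rw [hxy]
  set P := ⟪y - x, h⟫ with hP
  set Hn := ‖h‖^2 with hHn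
  have hHn0 : 0 ≤ Hn := by rw [hHn]; positivity
  have hne' : γ ≠ 0 := ne_of_gt hγ0
  have hid : (t*s + (1-t)*r - l/2*t*(1-t)*Hn + (‖y-x‖^2 + 2*(t*P) + t^2*Hn)/(2*γ))
        - (r + ‖y-x‖^2/(2*γ))
      = t * (s - r + P/γ - l/2*(1-t)*Hn + t*Hn/(2*γ)) := by
    field_simp
    ring
  have hE : 0 ≤ t * (s - r + P/γ - l/2*(1-t)*Hn + t*Hn/(2*γ)) := by
    rw [← hid]
    linarith [key]
  have hE2 : 0 ≤ s - r + P/γ - l/2*(1-t)*Hn + t*Hn/(2*γ) :=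
    nonneg_of_mul_nonneg_right hE ht0
  have h2 : 0 ≤ (s - r + P/γ - l/2*(1-t)*Hn + t*Hn/(2*γ)) * (2*γ) :=
    mul_nonneg hE2 (by positivity)
  have h3 : (s - r + P/γ - l/2*(1-t)*Hn + t*Hn/(2*γ)) * (2*γ)
      = (s - r)*(2*γ) + 2*P - l*(1-t)*Hn*γ + t*Hn := by field_simp
  rw [h3] at h2
  rw [← sub_nonneg]
  have h4 : s + t * ((1 + γ*l)/(2*γ)*Hn) - (r + -P/γ + l/2*Hn)
      = ((s - r)*(2*γ) + 2*P - l*(1-t)*Hn*γ + t*Hn) / (2*γ) := by field_simp; ring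
  rw [h4]
  positivity

lemma lemB (l γ : ℝ) (hγ0 : 0 < γ) (hγl : 0 < 1 + γ * l)
    (Φ : H → EReal) (x y : H) (r : ℝ) (hr : Φ y = (r : EReal))
    (hbot : ∀ z, Φ z ≠ ⊥)
    (hK : ∀ h, ((r + ⟪x - y, h⟫ / γ + l / 2 * ‖h‖ ^ 2 : ℝ) : EReal) ≤ Φ (y + h)) :
    ∀ z, Φ y + ((‖y - x‖ ^ 2 / (2 * γ) : ℝ) : EReal)
      ≤ Φ z + ((‖z - x‖ ^ 2 / (2 * γ) : ℝ) : EReal) := by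
  intro z
  rcases eq_or_ne (Φ z) ⊤ with htop | hne
  · rw [htop, EReal.top_add_coe]; exact le_top
  obtain ⟨s, hs⟩ : ∃ s : ℝ, Φ z = (s : EReal) := ⟨_, (EReal.coe_toReal hne (hbot z)).symm⟩
  have hK' := hK (z - y)
  have hz : y + (z - y) = z := by abel
  rw [hz, hs, EReal.coe_le_coe_iff] at hK'
  rw [hr, hs, ← EReal.coe_add, ← EReal.coe_add, EReal.coe_le_coe_iff]
  set P := ⟪x - y, z - y⟫ with hP
  have hexp : ‖z - x‖^2 = ‖y - x‖^2 + 2*(-P) + ‖z - y‖^2 := by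
    have e1 : z - x = (y - x) + (z - y) := by abel
    rw [e1, norm_add_sq_real]
    have : ⟪y - x, z - y⟫ = -P := by rw [hP, ← inner_neg_left]; congr 1; abel
    rw [this]
  rw [hexp]
  have hne' : γ ≠ 0 := ne_of_gt hγ0
  have hHn0 : (0:ℝ) ≤ ‖z - y‖^2 := by positivity
  rw [← sub_nonneg]
  have h4 : s + (‖y - x‖^2 + 2*(-P) + ‖z - y‖^2)/(2*γ) - (r + ‖y - x‖^2/(2*γ))
      = (s - (r + P/γ + l/2*‖z-y‖^2)) + (1 + γ*l)*‖z-y‖^2/(2*γ) := by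
    field_simp
    ring
  rw [h4]
  have : 0 ≤ (1 + γ*l)*‖z-y‖^2/(2*γ) := by positivity
  linarith [hK', this]

lemma lemC (l γ : ℝ) (hγ0 : 0 < γ)
    (Φ : H → EReal) (hbot : ∀ z, Φ z ≠ ⊥) (x y : H) (r : ℝ) (hr : Φ y = (r : EReal)) :
    (y, γ⁻¹ • (x - y) - l • y)
        ∈ subdiff (fun z => Φ z - (((l / 2) * ‖z‖ ^ 2 : ℝ) : EReal))
    ↔ ∀ h, ((r + ⟪x - y, h⟫ / γ + l / 2 * ‖h‖ ^ 2 : ℝ) : EReal) ≤ Φ (y + h) := by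
  simp only [subdiff, Set.mem_setOf_eq]
  refine forall_congr' (fun h => ?_)
  change Φ y - (((l / 2) * ‖y‖ ^ 2 : ℝ) : EReal)
      + ((⟪γ⁻¹ • (x - y) - l • y, h⟫ : ℝ) : EReal)
      ≤ Φ (y + h) - (((l / 2) * ‖y + h‖ ^ 2 : ℝ) : EReal) ↔ _
  rcases eq_or_ne (Φ (y + h)) ⊤ with htop | hne
  · rw [htop, EReal.top_sub_coe]
    exact iff_of_true le_top le_top
  obtain ⟨s, hs⟩ : ∃ s : ℝ, Φ (y + h) = (s : EReal) := ⟨_, (EReal.coe_toReal hne (hbot _)).symm⟩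
  rw [hs, hr, ← EReal.coe_sub, ← EReal.coe_add, ← EReal.coe_sub,
    EReal.coe_le_coe_iff, EReal.coe_le_coe_iff]
  have hu : ⟪γ⁻¹ • (x - y) - l • y, h⟫ = ⟪x - y, h⟫/γ - l * ⟪y, h⟫ := by
    rw [inner_sub_left, real_inner_smul_left, real_inner_smul_left, inv_mul_eq_div]
  have hexp : ‖y + h‖^2 = ‖y‖^2 + 2*⟪y, h⟫ + ‖h‖^2 := norm_add_sq_real y h
  rw [hu, hexp]
  constructor <;> intro h' <;> linarith

lemma resolvent_mem_iff (l γ : ℝ) (hγ0 : 0 < γ) (Φ : H → EReal) (x y : H) :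
    (x, y) ∈ opResolvent γ (subdiffL l Φ) ↔
      (y, γ⁻¹ • (x - y) - l • y)
        ∈ subdiff (fun z => Φ z - (((l / 2) * ‖z‖ ^ 2 : ℝ) : EReal)) := by
  have hne : γ ≠ 0 := ne_of_gt hγ0
  simp only [opResolvent, opInv, opAdd, opSMul, idOp, subdiffL, Set.mem_setOf_eq]
  constructor
  · rintro ⟨a, z, ha, ⟨v, ⟨u, w, hu, ⟨w', hw', rfl⟩, rfl⟩, rfl⟩, hx⟩
    rw [ha, hw'] at hx
    subst hx
    have e : γ⁻¹ • (y + γ • (u + l • y) - y) - l • y = u := by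
      rw [add_sub_cancel_left, inv_smul_smul₀ hne, add_sub_cancel_right]
    rw [e]
    exact hu
  · intro hu
    refine ⟨y, γ • (γ⁻¹ • (x - y) - l • y + l • y), rfl,
      ⟨_, ⟨_, _, hu, ⟨y, rfl, rfl⟩, rfl⟩, rfl⟩, ?_⟩
    rw [sub_add_cancel, smul_inv_smul₀ hne]
    abel

lemma prox_ne_top (γ : ℝ) (Φ : H → EReal) (hproper : ∃ z, Φ z ≠ ⊤) (x y : H)
    (hmin : ∀ z, Φ y + ((‖y - x‖ ^ 2 / (2 * γ) : ℝ) : EReal)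
      ≤ Φ z + ((‖z - x‖ ^ 2 / (2 * γ) : ℝ) : EReal)) : Φ y ≠ ⊤ := by
  obtain ⟨z, hz⟩ := hproper
  intro htop
  have := hmin z
  rw [htop, EReal.top_add_coe, top_le_iff] at this
  exact (EReal.add_lt_top hz (EReal.coe_ne_top _)).ne this

lemma subdiff_ne_top (l : ℝ) (Φ : H → EReal) (hproper : ∃ z, Φ z ≠ ⊤)
    (hbot : ∀ z, Φ z ≠ ⊥) (y u : H)
    (hu : (y, u) ∈ subdiff (fun z => Φ z - (((l / 2) * ‖z‖ ^ 2 : ℝ) : EReal))) :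
    Φ y ≠ ⊤ := by
  obtain ⟨z, hz⟩ := hproper
  intro htop
  have h1 := hu (z - y)
  simp only at h1
  rw [htop, EReal.top_sub_coe, EReal.top_add_coe, top_le_iff] at h1
  have hzy : y + (z - y) = z := by abel
  rw [hzy] at h1
  obtain ⟨s, hs⟩ : ∃ s : ℝ, Φ z = (s : EReal) := ⟨_, (EReal.coe_toReal hz (hbot z)).symm⟩
  rw [hs, ← EReal.coe_sub] at h1
  exact EReal.coe_ne_top _ h1

end Aux

/-- Let `Φ : H → (−∞,+∞]` be proper, `λ`-convex and lower semicontinuous on a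
real Hilbert space. Then for every `γ ∈ 𝔦_{−λ}` one has `J_γ(Φ) = R_γ(∂^λΦ)`, and for all
`(x,y), (x̂,ŷ) ∈ J_γ(Φ)`, `‖y − ŷ‖ ≤ (1 + γλ)⁻¹‖x − x̂‖`. -/
theorem proxOp_eq_resolvent_subdiffL {H : Type*} [NormedAddCommGroup H]
    [InnerProductSpace ℝ H] [CompleteSpace H] (l : ℝ) (Φ : H → EReal)
    (hbot : ∀ x, Φ x ≠ ⊥) (hproper : ∃ x, Φ x ≠ ⊤)
    (hconv : LambdaConvex l Φ) (hlsc : LowerSemicontinuous Φ)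
    (γ : ℝ) (hγ : γ ∈ Iomega (-l)) :
    proxOp Φ γ = opResolvent γ (subdiffL l Φ) ∧
    ∀ p ∈ proxOp Φ γ, ∀ q ∈ proxOp Φ γ,
      ‖p.2 - q.2‖ ≤ (1 + γ * l)⁻¹ * ‖p.1 - q.1‖ := by
  have hγ0 : 0 < γ := by
    rw [Iomega] at hγ
    split_ifs at hγ with hl
    · exact hγ.1
    · exact hγ
  have hγl : 0 < 1 + γ * l := by
    rw [Iomega] at hγ
    split_ifs at hγ with hl
    · have h1 : γ < 1 / (-l) := hγ.2
      have h2 : γ * (-l) < 1 := (lt_div_iff₀ hl).mp h1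
      nlinarith
    · push_neg at hl
      nlinarith
  -- key characterization of prox membership
  have keyprox : ∀ x y : H, (x, y) ∈ proxOp Φ γ →
      ∃ r : ℝ, Φ y = (r : EReal) ∧
        ∀ h, ((r + ⟪x - y, h⟫ / γ + l / 2 * ‖h‖ ^ 2 : ℝ) : EReal) ≤ Φ (y + h) := by
    intro x y hp
    have hmin := (prox_mem_iff Φ γ x y).mp hp
    have hnt : Φ y ≠ ⊤ := prox_ne_top γ Φ hproper x y hmin
    obtain ⟨r, hr⟩ : ∃ r : ℝ, Φ y = (r : EReal) := ⟨_, (EReal.coe_toReal hnt (hbot y)).symm⟩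
    exact ⟨r, hr, fun h => lemA l γ hγ0 hγl Φ hconv x y r hr hmin h⟩
  constructor
  · ext ⟨x, y⟩
    constructor
    · intro hp
      obtain ⟨r, hr, hK⟩ := keyprox x y hp
      exact (resolvent_mem_iff l γ hγ0 Φ x y).mpr
        ((lemC l γ hγ0 Φ hbot x y r hr).mpr hK)
    · intro hres
      have hsd := (resolvent_mem_iff l γ hγ0 Φ x y).mp hres
      have hnt : Φ y ≠ ⊤ := subdiff_ne_top l Φ hproper hbot y _ hsd
      obtain ⟨r, hr⟩ : ∃ r : ℝ, Φ y = (r : EReal) := ⟨_, (EReal.coe_toReal hnt (hbot y)).symm⟩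
      have hK := (lemC l γ hγ0 Φ hbot x y r hr).mp hsd
      exact (prox_mem_iff Φ γ x y).mpr (lemB l γ hγ0 hγl Φ x y r hr hbot hK)
  · rintro ⟨x, y⟩ hp ⟨x', y'⟩ hq
    obtain ⟨r, hr, hK⟩ := keyprox x y hp
    obtain ⟨r', hr', hK'⟩ := keyprox x' y' hq
    simp only
    have h1 := hK (y' - y)
    have h2 := hK' (y - y')
    have e1 : y + (y' - y) = y' := by abel
    have e2 : y' + (y - y') = y := by abel
    rw [e1, hr', EReal.coe_le_coe_iff] at h1
    rw [e2, hr, EReal.coe_le_coe_iff] at h2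
    -- real inequalities
    have hnn : ‖y' - y‖ = ‖y - y'‖ := norm_sub_rev _ _
    rw [hnn] at h1
    set d := y - y' with hd
    have hip1 : ⟪x - y, y' - y⟫ = -⟪x - y, d⟫ := by
      rw [hd, ← inner_neg_right]; congr 1; abel
    rw [hip1] at h1
    -- h1 : r + (-⟪x-y,d⟫)/γ + l/2‖d‖² ≤ r'
    -- h2 : r' + ⟪x'-y',d⟫/γ + l/2‖d‖² ≤ r
    have hsum : (⟪x' - y', d⟫ - ⟪x - y, d⟫)/γ + l*‖d‖^2 ≤ 0 := by
      have hne : γ ≠ 0 := ne_of_gt hγ0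
      have : (⟪x' - y', d⟫ - ⟪x - y, d⟫)/γ = ⟪x' - y', d⟫/γ + (-⟪x - y, d⟫)/γ := by
        field_simp; ring
      rw [this]
      linarith
    have hinner : ⟪x - y, d⟫ - ⟪x' - y', d⟫ = ⟪x - x', d⟫ - ‖d‖^2 := by
      have : (x - y) - (x' - y') = (x - x') - d := by rw [hd]; abel
      rw [← inner_sub_left, this, inner_sub_left, real_inner_self_eq_norm_sq]
    have hCS : ⟪x - x', d⟫ ≤ ‖x - x'‖ * ‖d‖ := real_inner_le_norm _ _
    have hmain : (1 + γ*l) * ‖d‖^2 ≤ ‖x - x'‖ * ‖d‖ := by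
      have h5 : 0 ≤ -((⟪x' - y', d⟫ - ⟪x - y, d⟫)/γ + l*‖d‖^2) * γ :=
        mul_nonneg (by linarith) (le_of_lt hγ0)
      have h6 : -((⟪x' - y', d⟫ - ⟪x - y, d⟫)/γ + l*‖d‖^2) * γ
          = (⟪x - y, d⟫ - ⟪x' - y', d⟫) - γ*l*‖d‖^2 := by
        field_simp; ring
      rw [h6, hinner] at h5
      nlinarith [hCS]
    rcases eq_or_lt_of_le (norm_nonneg d) with h0 | h0
    · rw [← h0]
      positivity
    · have h7 : (1 + γ*l) * ‖d‖ ≤ ‖x - x'‖ := by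
        have := mul_le_mul_of_nonneg_right hmain (le_of_lt (inv_pos.mpr h0))
        calc (1 + γ*l) * ‖d‖ = (1 + γ*l) * ‖d‖^2 * ‖d‖⁻¹ := by
              field_simp
          _ ≤ ‖x - x'‖ * ‖d‖ * ‖d‖⁻¹ := this
          _ = ‖x - x'‖ := by field_simp
      calc ‖d‖ = (1 + γ*l)⁻¹ * ((1 + γ*l) * ‖d‖) := by field_simp
        _ ≤ (1 + γ*l)⁻¹ * ‖x - x'‖ :=
            mul_le_mul_of_nonneg_left h7 (le_of_lt (inv_pos.mpr hγl))
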